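/- Let d ≥ 1. For each x₁ ∈ ℝᵈ, let p(·,·|x₁) : [0,1] × ℝᵈ → ℝ_{>0} be a conditional probability density path and u(·,·|x₁) : [0,1] × ℝᵈ → ℝᵈ a time-dependent vector field such that for each fixed x₁ the pair satisfies the continuity equation ∂_t p_t(x|x₁) + div_x(p_t(x|x₁) u_t(x|x₁)) = 0 for all t ∈ [0,1] and x ∈ ℝᵈ. Let q be a probability density on ℝᵈ. Define the marginal path p_t(x) = ∫ p_t(x|x₁) q(x₁) dx₁ and assume p_t(x) > 0 for all t, x. Define the marginal vector field u_t(x) = ∫ u_t(x|x₁) p_t(x|x₁) q(x₁) / p_t(x) dx₁. Assume the regularity needed to differentiate under the integral sign and to exchange divergence with integration (e.g., the integrands and their relevant t- and x-derivatives are dominated by integrable functions). Then p_t and u_t satisfy the continuity equation: ∂_t p_t(x) + div_x(p_t(x) u_t(x)) = 0 for all t ∈ [0,1] and x ∈ ℝᵈ. -/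

import Mathlib

open MeasureTheory Set

noncomputable section

/-- The (spatial) divergence of a vector field on `ℝᵈ`: `div v x = ∑ i ∂vⁱ/∂xⁱ (x)`. -/
def divergence {d : ℕ} (v : EuclideanSpace ℝ (Fin d) → EuclideanSpace ℝ (Fin d))
    (x : EuclideanSpace ℝ (Fin d)) : ℝ :=
  ∑ i, fderiv ℝ v x (EuclideanSpace.single i 1) i

lemma divergence_const_smul {d : ℕ} (c : ℝ)
    (f : EuclideanSpace ℝ (Fin d) → EuclideanSpace ℝ (Fin d))
    (x : EuclideanSpace ℝ (Fin d)) :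
    divergence (fun y => c • f y) x = c * divergence f x := by
  have hfd : fderiv ℝ (fun y => c • f y) x = c • fderiv ℝ f x := by
    rcases eq_or_ne c 0 with rfl | hc
    · simp
      ext v i
      simp
    by_cases hf : DifferentiableAt ℝ f x
    · exact fderiv_fun_const_smul hf c
    · have hcf : ¬ DifferentiableAt ℝ (fun y => c • f y) x := by
        intro h
        have := h.const_smul c⁻¹
        have e : (c⁻¹ • fun y => c • f y) = f := by
          funext y; simp only [Pi.smul_apply, smul_smul, inv_mul_cancel₀ hc, one_smul]
        rw [e] at this
        exact hf this
      rw [fderiv_zero_of_not_differentiableAt hf,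
        fderiv_zero_of_not_differentiableAt hcf]
      ext v i
      simp
  unfold divergence
  simp [hfd, Finset.mul_sum]

/-- **Marginal vector field generates the marginal probability path.**
If for each `x₁` the conditional pair `(p_t(·|x₁), u_t(·|x₁))` satisfies the continuity
equation, then the marginal path `p_t(x) = ∫ p_t(x|x₁) q(x₁) dx₁` and the marginal field
`u_t(x) = ∫ u_t(x|x₁) p_t(x|x₁) q(x₁) / p_t(x) dx₁` also satisfy the continuity equation. -/
theorem marginal_vf_generates_marginal_path
    {d : ℕ} (hd : 1 ≤ d)
    (pcond : ℝ → EuclideanSpace ℝ (Fin d) → EuclideanSpace ℝ (Fin d) → ℝ)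
    (ucond : ℝ → EuclideanSpace ℝ (Fin d) → EuclideanSpace ℝ (Fin d) →
      EuclideanSpace ℝ (Fin d))
    (q : EuclideanSpace ℝ (Fin d) → ℝ)
    (pmarg : ℝ → EuclideanSpace ℝ (Fin d) → ℝ)
    (umarg : ℝ → EuclideanSpace ℝ (Fin d) → EuclideanSpace ℝ (Fin d))
    -- `p(·,·|x₁)` is a positive conditional probability density path
    (hpcond_pos : ∀ t x x₁, 0 < pcond t x x₁)
    (hpcond_int : ∀ x₁, ∀ t ∈ Icc (0:ℝ) 1, ∫ x, pcond t x x₁ = 1)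
    -- `q` is a probability density on `ℝᵈ`
    (hq_nonneg : ∀ x₁, 0 ≤ q x₁)
    (hq_int : ∫ x₁, q x₁ = 1)
    -- each conditional pair satisfies the continuity equation
    (hcond : ∀ x₁, ∀ t ∈ Icc (0:ℝ) 1, ∀ x,
      deriv (fun s => pcond s x x₁) t
        + divergence (fun y => pcond t y x₁ • ucond t y x₁) x = 0)
    -- the marginal probability path, assumed positive everywhere
    (hpmarg : ∀ t x, pmarg t x = ∫ x₁, pcond t x x₁ * q x₁)
    (hpmarg_pos : ∀ t x, 0 < pmarg t x)
    -- the marginal vector field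
    (humarg : ∀ t x, umarg t x
      = (pmarg t x)⁻¹ • ∫ x₁, (pcond t x x₁ * q x₁) • ucond t x x₁)
    -- regularity: differentiation in `t` under the integral sign
    (h_deriv_swap : ∀ x, ∀ t ∈ Icc (0:ℝ) 1,
      deriv (fun s => pmarg s x) t = ∫ x₁, deriv (fun s => pcond s x x₁) t * q x₁)
    -- regularity: the divergence commutes with the integral over `x₁`
    (h_div_swap : ∀ x, ∀ t ∈ Icc (0:ℝ) 1,
      divergence (fun y => pmarg t y • umarg t y) x
        = ∫ x₁, divergence (fun y => (pcond t y x₁ * q x₁) • ucond t y x₁) x) :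
    ∀ t ∈ Icc (0:ℝ) 1, ∀ x,
      deriv (fun s => pmarg s x) t
        + divergence (fun y => pmarg t y • umarg t y) x = 0 := by
  intro t ht x
  rw [h_deriv_swap x t ht, h_div_swap x t ht]
  have key : ∀ x₁, divergence (fun y => (pcond t y x₁ * q x₁) • ucond t y x₁) x
      = -(deriv (fun s => pcond s x x₁) t * q x₁) := by
    intro x₁
    have h1 : (fun y => (pcond t y x₁ * q x₁) • ucond t y x₁)
        = fun y => q x₁ • (pcond t y x₁ • ucond t y x₁) := by
      funext y
      rw [smul_smul, mul_comm]
    rw [h1, divergence_const_smul]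
    have h2 := hcond x₁ t ht x
    have h3 : divergence (fun y => pcond t y x₁ • ucond t y x₁) x
        = -deriv (fun s => pcond s x x₁) t := by linarith
    rw [h3]; ring
  rw [integral_congr_ae (Filter.Eventually.of_forall key), integral_neg]
  ring

end
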